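/- arXiv:1803.08166 — 2 statements merged into one kernel-verified Lean document; each statement's English description precedes it below -/
import Mathlib

section
/- For every c > 0, writing A = A(c) and ȳ = ȳ(c), one has φ_A(x_v + ȳ) = φ_A(x_v − ȳ) = φ_A(x_v) − c, and for every x ∈ ℝ with 0 < |x − x_v| < ȳ, φ_A(x_v) − c < φ_A(x) < φ_A(x_v). In particular, on the interval [x_v − ȳ, x_v + ȳ], φ_A attains its maximum value φ_A(x_v) only at x_v and its minimum value φ_A(x_v) − c only at the two endpoints. -/
/-- `h_A(y) = A θ e^{θ y} − A θ e^{−θ y} − 2 k₂ y`. -/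
noncomputable def hFun (θ k₂ A y : ℝ) : ℝ :=
  A * θ * Real.exp (θ * y) - A * θ * Real.exp (-(θ * y)) - 2 * k₂ * y

/-- `g(A) = −A e^{θ ȳ(A)} − A e^{−θ ȳ(A)} + k₂ ȳ(A)² + 2A`. -/
noncomputable def gFun (θ k₂ : ℝ) (ybar : ℝ → ℝ) (A : ℝ) : ℝ :=
  -A * Real.exp (θ * ybar A) - A * Real.exp (-(θ * ybar A)) + k₂ * (ybar A) ^ 2 + 2 * A

/-- `φ_A(x) = A e^{θ(x−x_v)} + A e^{−θ(x−x_v)} − k₂ (x−x_v)² + k₀`. -/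
noncomputable def phiFun (θ k₂ k₀ xv A x : ℝ) : ℝ :=
  A * Real.exp (θ * (x - xv)) + A * Real.exp (-(θ * (x - xv))) - k₂ * (x - xv) ^ 2 + k₀

theorem stmt_18 (ρ σ Δ b θ k₂ k₀ α xv yv : ℝ)
    (hρ : 0 < ρ) (hσ : 0 < σ) (hΔ : 0 < Δ) (hb : 0 ≤ b)
    (hθ : θ = Real.sqrt (2 * ρ) / σ)
    (hα : α = (Δ + b) / Δ ^ 2)
    (hxv : xv = Δ * (Δ + 2 * b) / (2 * (Δ + b)))
    (hyv : yv = Δ ^ 2 / (4 * (Δ + b)))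
    (hk₂ : k₂ = α / ρ)
    (hk₀ : k₀ = yv / ρ - 2 * k₂ / θ ^ 2)
    (ybarA : ℝ → ℝ)
    (hybarA : ∀ A : ℝ, 0 < A → A < k₂ / θ ^ 2 →
      0 < ybarA A ∧ hFun θ k₂ A (ybarA A) = 0)
    (Ac : ℝ → ℝ)
    (hAc : ∀ c : ℝ, 0 < c →
      0 < Ac c ∧ Ac c < k₂ / θ ^ 2 ∧ gFun θ k₂ ybarA (Ac c) = c) :
    ∀ c : ℝ, 0 < c →
      phiFun θ k₂ k₀ xv (Ac c) (xv + ybarA (Ac c)) = phiFun θ k₂ k₀ xv (Ac c) xv - c ∧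
      phiFun θ k₂ k₀ xv (Ac c) (xv - ybarA (Ac c)) = phiFun θ k₂ k₀ xv (Ac c) xv - c ∧
      (∀ x : ℝ, 0 < |x - xv| → |x - xv| < ybarA (Ac c) →
        phiFun θ k₂ k₀ xv (Ac c) xv - c < phiFun θ k₂ k₀ xv (Ac c) x ∧
        phiFun θ k₂ k₀ xv (Ac c) x < phiFun θ k₂ k₀ xv (Ac c) xv) ∧
      (∀ x ∈ Set.Icc (xv - ybarA (Ac c)) (xv + ybarA (Ac c)),
        phiFun θ k₂ k₀ xv (Ac c) x ≤ phiFun θ k₂ k₀ xv (Ac c) xv ∧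
        (phiFun θ k₂ k₀ xv (Ac c) x = phiFun θ k₂ k₀ xv (Ac c) xv → x = xv) ∧
        phiFun θ k₂ k₀ xv (Ac c) xv - c ≤ phiFun θ k₂ k₀ xv (Ac c) x ∧
        (phiFun θ k₂ k₀ xv (Ac c) x = phiFun θ k₂ k₀ xv (Ac c) xv - c →
          x = xv - ybarA (Ac c) ∨ x = xv + ybarA (Ac c))) := by
  intro c hc
  obtain ⟨hA0, hA1, hg⟩ := hAc c hc
  set A := Ac c with hAdef
  obtain ⟨hY0, hhY⟩ := hybarA A hA0 hA1
  set Y := ybarA A with hYdef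
  have hθ0 : 0 < θ := by rw [hθ]; positivity
  -- derivative of hFun
  have hlin : ∀ y : ℝ, HasDerivAt (fun y : ℝ => θ * y) θ y := by
    intro y; simpa using (hasDerivAt_id y).const_mul θ
  have hd1 : ∀ y : ℝ, HasDerivAt (hFun θ k₂ A)
      (A * θ * θ * Real.exp (θ * y) + A * θ * θ * Real.exp (-(θ * y)) - 2 * k₂) y := by
    intro y
    have e1 := (hlin y).exp
    have e2 := ((hlin y).neg).exp
    have d := ((e1.const_mul (A * θ)).sub (e2.const_mul (A * θ))).sub
      ((hasDerivAt_id y).const_mul (2 * k₂))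
    unfold hFun
    refine d.congr_deriv ?_
    simp only [Pi.neg_apply]
    ring
  have hd2 : ∀ y : ℝ, HasDerivAt
      (fun y => A * θ * θ * Real.exp (θ * y) + A * θ * θ * Real.exp (-(θ * y)) - 2 * k₂)
      (A * θ * θ * θ * Real.exp (θ * y) - A * θ * θ * θ * Real.exp (-(θ * y))) y := by
    intro y
    have e1 := (hlin y).exp
    have e2 := ((hlin y).neg).exp
    have d := ((e1.const_mul (A * θ * θ)).add (e2.const_mul (A * θ * θ))).sub
      (hasDerivAt_const y (2 * k₂))
    refine d.congr_deriv ?_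
    simp only [Pi.neg_apply]
    ring
  have hconv : StrictConvexOn ℝ (Set.Icc 0 Y) (hFun θ k₂ A) := by
    apply strictConvexOn_of_deriv2_pos (convex_Icc 0 Y)
    · exact fun y _ => (hd1 y).continuousAt.continuousWithinAt
    · intro y hy
      rw [interior_Icc] at hy
      have e0 : deriv (hFun θ k₂ A) = fun y =>
          A * θ * θ * Real.exp (θ * y) + A * θ * θ * Real.exp (-(θ * y)) - 2 * k₂ :=
        funext fun y => (hd1 y).deriv
      have e2 : deriv^[2] (hFun θ k₂ A) y
          = A * θ * θ * θ * Real.exp (θ * y) - A * θ * θ * θ * Real.exp (-(θ * y)) := by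
        show deriv (deriv (hFun θ k₂ A)) y = _
        rw [e0]; exact (hd2 y).deriv
      rw [e2]
      have hlt : Real.exp (-(θ * y)) < Real.exp (θ * y) := by
        apply Real.exp_lt_exp.mpr; nlinarith [hy.1]
      nlinarith [mul_pos (mul_pos (mul_pos hA0 hθ0) hθ0) hθ0, sub_pos.mpr hlt,
        mul_pos (mul_pos (mul_pos (mul_pos hA0 hθ0) hθ0) hθ0) (sub_pos.mpr hlt)]
  have h0 : hFun θ k₂ A 0 = 0 := by unfold hFun; simp
  have hneg : ∀ y : ℝ, 0 < y → y < Y → hFun θ k₂ A y < 0 := by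
    intro y h1 h2
    have hYne : (0 : ℝ) ≠ Y := ne_of_lt hY0
    have ha : 0 < 1 - y / Y := by
      have : y / Y < 1 := (div_lt_one hY0).mpr h2
      linarith
    have hb : 0 < y / Y := div_pos h1 hY0
    have key := hconv.2 (Set.left_mem_Icc.mpr hY0.le) (Set.right_mem_Icc.mpr hY0.le)
      hYne ha hb (by ring)
    have hyy : (1 - y / Y) • (0 : ℝ) + (y / Y) • Y = y := by
      rw [smul_eq_mul, smul_eq_mul, mul_zero, zero_add, div_mul_cancel₀ _ (ne_of_gt hY0)]
    rw [hyy, h0, hhY, smul_eq_mul, smul_eq_mul, mul_zero, mul_zero, add_zero] at key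
    exact key
  set ψ : ℝ → ℝ := fun y => A * Real.exp (θ * y) + A * Real.exp (-(θ * y)) - k₂ * y ^ 2 - 2 * A
    with hψdef
  have hdψ : ∀ y : ℝ, HasDerivAt ψ (hFun θ k₂ A y) y := by
    intro y
    have e1 := (hlin y).exp
    have e2 := ((hlin y).neg).exp
    have d := (((e1.const_mul A).add (e2.const_mul A)).sub
      (((hasDerivAt_pow 2 y)).const_mul k₂)).sub (hasDerivAt_const y (2 * A))
    rw [hψdef]
    refine d.congr_deriv ?_
    simp only [Pi.neg_apply]
    unfold hFun
    push_cast
    ring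
  have hanti : StrictAntiOn ψ (Set.Icc 0 Y) := by
    apply strictAntiOn_of_deriv_neg (convex_Icc 0 Y)
    · exact fun y _ => (hdψ y).continuousAt.continuousWithinAt
    · intro y hy
      rw [interior_Icc] at hy
      rw [(hdψ y).deriv]
      exact hneg y hy.1 hy.2
  have hψ0 : ψ 0 = 0 := by
    rw [hψdef]
    simp only [mul_zero, neg_zero, Real.exp_zero, mul_one]
    ring
  have hψY : ψ Y = -c := by
    unfold gFun at hg
    rw [hψdef]
    simp only [← hYdef] at hg ⊢
    linarith
  have heven : ∀ y : ℝ, ψ (-y) = ψ y := by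
    intro y
    rw [hψdef]
    simp only [mul_neg, neg_neg]
    ring
  have hφ : ∀ x : ℝ, phiFun θ k₂ k₀ xv A x = ψ (x - xv) + phiFun θ k₂ k₀ xv A xv := by
    intro x
    unfold phiFun
    rw [hψdef]
    simp only [sub_self, mul_zero, neg_zero, Real.exp_zero]
    ring
  have habs : ∀ x : ℝ, ψ (x - xv) = ψ |x - xv| := by
    intro x
    rcases abs_choice (x - xv) with h | h
    · rw [h]
    · rw [h, heven]
  -- main inequalities
  have key1 : ∀ y ∈ Set.Icc (0 : ℝ) Y, ψ y ≤ 0 ∧ (ψ y = 0 → y = 0) ∧ -c ≤ ψ y ∧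
      (ψ y = -c → y = Y) := by
    intro y hy
    have hmem0 : (0 : ℝ) ∈ Set.Icc (0 : ℝ) Y := Set.left_mem_Icc.mpr hY0.le
    have hmemY : Y ∈ Set.Icc (0 : ℝ) Y := Set.right_mem_Icc.mpr hY0.le
    have hle : ψ y ≤ 0 := by
      rcases eq_or_lt_of_le hy.1 with h | h
      · rw [← h, hψ0]
      · have := hanti hmem0 hy h; linarith
    have hge : -c ≤ ψ y := by
      rcases eq_or_lt_of_le hy.2 with h | h
      · rw [h, hψY]
      · have := hanti hy hmemY h; linarith
    refine ⟨hle, ?_, hge, ?_⟩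
    · intro he
      by_contra hne
      have h : 0 < y := lt_of_le_of_ne hy.1 (Ne.symm hne)
      have := hanti hmem0 hy h
      rw [he, hψ0] at this
      exact lt_irrefl 0 this
    · intro he
      by_contra hne
      have h : y < Y := lt_of_le_of_ne hy.2 hne
      have := hanti hy hmemY h
      rw [he, hψY] at this
      exact lt_irrefl (-c) this
  refine ⟨?_, ?_, ?_, ?_⟩
  · rw [hφ]
    have e : xv + Y - xv = Y := by ring
    rw [e, hψY]; ring
  · rw [hφ]
    have e : xv - Y - xv = -Y := by ring
    rw [e, heven, hψY]; ring
  · intro x hx1 hx2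
    have hmem : |x - xv| ∈ Set.Icc (0 : ℝ) Y := ⟨abs_nonneg _, hx2.le⟩
    have h1 := hanti (Set.left_mem_Icc.mpr hY0.le) hmem hx1
    have h2 := hanti hmem (Set.right_mem_Icc.mpr hY0.le) hx2
    rw [hψ0] at h1
    rw [hψY] at h2
    have := hφ x
    rw [habs x] at this
    constructor <;> linarith
  · intro x hx
    have hmem : |x - xv| ∈ Set.Icc (0 : ℝ) Y := by
      constructor
      · exact abs_nonneg _
      · rw [abs_le]; constructor <;> [linarith [hx.1]; linarith [hx.2]]
    obtain ⟨k1, k2', k3, k4⟩ := key1 _ hmem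
    have hrel := hφ x
    rw [habs x] at hrel
    refine ⟨by linarith, ?_, by linarith, ?_⟩
    · intro he
      have : ψ |x - xv| = 0 := by linarith
      have := k2' this
      have := abs_eq_zero.mp this
      linarith [sub_eq_zero.mp this]
    · intro he
      have : ψ |x - xv| = -c := by linarith
      have habsY : |x - xv| = Y := k4 this
      rcases abs_eq hY0.le |>.mp habsY with h | h
      · right; linarith
      · left; linarith
end

section
/- For every c ∈ (0, c̄), writing A = A(c) and ȳ = ȳ(c), one has R(x) ≤ ρ (φ_A(x_v) − c) for every x ∈ ℝ with |x − x_v| ≥ ȳ; that is, on the action region the instantaneous payoff never exceeds the discounted value φ_A(x_v) − c multiplied by ρ. -/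
/-- `ξ(y) = k₂ y² − (2k₂/θ) ((e^{θy}+e^{−θy}−2)/(e^{θy}−e^{−θy})) y`. -/
noncomputable def xiFun (θ k₂ y : ℝ) : ℝ :=
  k₂ * y ^ 2 -
    (2 * k₂ / θ) *
      ((Real.exp (θ * y) + Real.exp (-(θ * y)) - 2) /
        (Real.exp (θ * y) - Real.exp (-(θ * y)))) * y

/-- The payoff `R(x) = x − b` for `x < 0`, `−α(x−x_v)² + y_v` for `0 ≤ x ≤ Δ`, `0` for `x > Δ`. -/
noncomputable def RFun (b α xv yv Δ x : ℝ) : ℝ :=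
  if x < 0 then x - b else if x ≤ Δ then -α * (x - xv) ^ 2 + yv else 0

lemma aux_sinh_le_mul_cosh {x : ℝ} (hx : 0 ≤ x) : Real.sinh x ≤ x * Real.cosh x := by
  have key : MonotoneOn (fun t : ℝ => t * Real.cosh t - Real.sinh t) (Set.Ici 0) := by
    have hd : ∀ t : ℝ, HasDerivAt (fun t : ℝ => t * Real.cosh t - Real.sinh t)
        (t * Real.sinh t) t := by
      intro t
      have h1 := ((hasDerivAt_id t).mul (Real.hasDerivAt_cosh t)).sub (Real.hasDerivAt_sinh t)
      refine h1.congr_deriv ?_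
      simp only [id_eq, one_mul]; ring
    apply monotoneOn_of_deriv_nonneg (convex_Ici 0)
    · exact (Continuous.continuousOn (by continuity))
    · intro t ht
      exact (hd t).differentiableAt.differentiableWithinAt
    · intro t ht
      rw [interior_Ici] at ht
      rw [(hd t).deriv]
      exact mul_nonneg (le_of_lt ht) (Real.sinh_nonneg_iff.mpr (le_of_lt ht))
  have h0 : (0:ℝ) * Real.cosh 0 - Real.sinh 0 ≤ x * Real.cosh x - Real.sinh x :=
    key (Set.self_mem_Ici) hx hx
  simp at h0
  linarith

lemma aux_tanh_le {x : ℝ} (hx : 0 ≤ x) : Real.tanh x ≤ x := by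
  rw [Real.tanh_eq_sinh_div_cosh, div_le_iff₀ (Real.cosh_pos _)]
  exact aux_sinh_le_mul_cosh hx

lemma aux_hasDerivAt_tanh (x : ℝ) : HasDerivAt Real.tanh (1 / Real.cosh x ^ 2) x := by
  have h := (Real.hasDerivAt_sinh x).div (Real.hasDerivAt_cosh x) (ne_of_gt (Real.cosh_pos _))
  have heq : (Real.cosh x * Real.cosh x - Real.sinh x * Real.sinh x) / Real.cosh x ^ 2
      = 1 / Real.cosh x ^ 2 := by
    have := Real.cosh_sq x
    field_simp
    nlinarith [this]
  rw [heq] at h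
  have hfun : Real.tanh = Real.sinh / Real.cosh := by
    funext t
    exact Real.tanh_eq_sinh_div_cosh t
  rw [hfun]; exact h

lemma aux_xi_tanh {θ k₂ : ℝ} (hθ : 0 < θ) {y : ℝ} (hy : 0 < y) :
    xiFun θ k₂ y = k₂ * y ^ 2 - (2 * k₂ / θ) * (y * Real.tanh (θ * y / 2)) := by
  have hv : 0 < θ * y / 2 := by positivity
  have h2 : Real.exp (θ * y) = Real.exp (θ * y / 2) * Real.exp (θ * y / 2) := by
    rw [← Real.exp_add]; ring_nf
  have h3 : Real.exp (-(θ * y)) = (Real.exp (θ * y / 2) * Real.exp (θ * y / 2))⁻¹ := by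
    rw [Real.exp_neg, h2]
  have h4 : Real.exp (-(θ * y / 2)) = (Real.exp (θ * y / 2))⁻¹ := by rw [Real.exp_neg]
  rw [xiFun, Real.tanh_eq_sinh_div_cosh, Real.sinh_eq, Real.cosh_eq, h4, h2, h3]
  set E := Real.exp (θ * y / 2) with hE
  have hE1 : 1 < E := Real.one_lt_exp_iff.2 hv
  have hE0' : E ≠ 0 := by positivity
  have hEE : E * E - (E * E)⁻¹ ≠ 0 := by
    have h5 : 1 < E * E := one_lt_mul_of_lt_of_le hE1 hE1.le
    have h6 : (E * E)⁻¹ < 1 := inv_lt_one_of_one_lt₀ h5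
    nlinarith
  have hsum : E + E⁻¹ ≠ 0 := by positivity
  have h8 : E ^ 4 * θ - θ ≠ 0 := by
    have h9 : 1 < E ^ 4 := one_lt_pow₀ hE1 (by norm_num)
    have : 0 < E ^ 4 * θ - θ := by nlinarith
    exact ne_of_gt this
  have hid : (E ^ 4 * θ - θ) * (E ^ 4 * θ - θ)⁻¹ = 1 := mul_inv_cancel₀ h8
  field_simp
  have h10 : E ^ 4 - 1 ≠ 0 := by
    have h9 : 1 < E ^ 4 := one_lt_pow₀ hE1 (by norm_num)
    exact ne_of_gt (by linarith)
  field_simp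
  ring

lemma aux_xi_mono {θ k₂ : ℝ} (hθ : 0 < θ) (hk : 0 < k₂) {y z : ℝ} (hy : 0 < y) (hyz : y ≤ z) :
    xiFun θ k₂ y ≤ xiFun θ k₂ z := by
  rw [aux_xi_tanh hθ hy, aux_xi_tanh hθ (lt_of_lt_of_le hy hyz)]
  have hd : ∀ t : ℝ, HasDerivAt (fun t : ℝ => k₂ * t ^ 2 - 2 * k₂ / θ * (t * Real.tanh (θ * t / 2)))
      (2 * k₂ * t - 2 * k₂ / θ * (Real.tanh (θ * t / 2) + t * (1 / Real.cosh (θ * t / 2) ^ 2 * (θ / 2)))) t := by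
    intro t
    have h1 : HasDerivAt (fun t : ℝ => θ * t / 2) (θ / 2) t := by
      simpa using ((hasDerivAt_id t).const_mul θ).div_const 2
    have h2 : HasDerivAt (fun t : ℝ => Real.tanh (θ * t / 2))
        (1 / Real.cosh (θ * t / 2) ^ 2 * (θ / 2)) t := (aux_hasDerivAt_tanh _).comp t h1
    have h3 := (hasDerivAt_id t).mul h2
    have h4 := (hasDerivAt_pow 2 t).const_mul k₂
    have h5 := h4.sub (h3.const_mul (2 * k₂ / θ))
    refine h5.congr_deriv ?_
    simp only [id_eq, one_mul, Nat.cast_ofNat, pow_one]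
    ring
  have hdiff : Differentiable ℝ (fun t : ℝ => k₂ * t ^ 2 - 2 * k₂ / θ * (t * Real.tanh (θ * t / 2))) :=
    fun t => (hd t).differentiableAt
  have mono : MonotoneOn (fun t : ℝ => k₂ * t ^ 2 - 2 * k₂ / θ * (t * Real.tanh (θ * t / 2)))
      (Set.Ici 0) := by
    apply monotoneOn_of_deriv_nonneg (convex_Ici 0) hdiff.continuous.continuousOn
      hdiff.differentiableOn
    intro t ht
    rw [interior_Ici] at ht
    rw [(hd t).deriv]
    have ht0 : (0:ℝ) ≤ t := le_of_lt ht
    have hs : Real.tanh (θ * t / 2) ≤ θ * t / 2 := aux_tanh_le (by positivity)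
    have hc : 1 ≤ Real.cosh (θ * t / 2) := Real.one_le_cosh _
    have hc2 : 1 / Real.cosh (θ * t / 2) ^ 2 ≤ 1 := by
      rw [div_le_one (by positivity)]; nlinarith
    have hc2' : 0 ≤ 1 / Real.cosh (θ * t / 2) ^ 2 := by positivity
    have hpos : 0 < 2 * k₂ / θ := by positivity
    have e1 : 2 * k₂ / θ * Real.tanh (θ * t / 2) ≤ 2 * k₂ / θ * (θ * t / 2) :=
      mul_le_mul_of_nonneg_left hs hpos.le
    have e2 : 2 * k₂ / θ * (θ * t / 2) = k₂ * t := by field_simp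
    have e3 : 2 * k₂ / θ * (t * (1 / Real.cosh (θ * t / 2) ^ 2 * (θ / 2)))
        = k₂ * t * (1 / Real.cosh (θ * t / 2) ^ 2) := by field_simp
    have e4 : k₂ * t * (1 / Real.cosh (θ * t / 2) ^ 2) ≤ k₂ * t := by
      have := mul_le_of_le_one_right (by positivity : (0:ℝ) ≤ k₂ * t) hc2
      linarith
    nlinarith [e1, e2, e3, e4]
  exact mono (Set.mem_Ici.2 hy.le) (Set.mem_Ici.2 (hy.le.trans hyz)) hyz

theorem stmt_19 (ρ σ Δ b θ k₂ k₀ α xv yv : ℝ)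
    (hρ : 0 < ρ) (hσ : 0 < σ) (hΔ : 0 < Δ) (hb : 0 ≤ b)
    (hθ : θ = Real.sqrt (2 * ρ) / σ)
    (hα : α = (Δ + b) / Δ ^ 2)
    (hxv : xv = Δ * (Δ + 2 * b) / (2 * (Δ + b)))
    (hyv : yv = Δ ^ 2 / (4 * (Δ + b)))
    (hk₂ : k₂ = α / ρ)
    (hk₀ : k₀ = yv / ρ - 2 * k₂ / θ ^ 2)
    (ybarA : ℝ → ℝ)
    (hybarA : ∀ A : ℝ, 0 < A → A < k₂ / θ ^ 2 →
      0 < ybarA A ∧ hFun θ k₂ A (ybarA A) = 0)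
    (Ac : ℝ → ℝ)
    (hAc : ∀ c : ℝ, 0 < c →
      0 < Ac c ∧ Ac c < k₂ / θ ^ 2 ∧ gFun θ k₂ ybarA (Ac c) = c) :
    ∀ c : ℝ, 0 < c → c < xiFun θ k₂ (Δ - xv) →
      ∀ x : ℝ, ybarA (Ac c) ≤ |x - xv| →
        RFun b α xv yv Δ x ≤ ρ * (phiFun θ k₂ k₀ xv (Ac c) xv - c) := by
  intro c hc hcc x hx
  obtain ⟨hA0, hAA, hg⟩ := hAc c hc
  obtain ⟨hy0, hh⟩ := hybarA (Ac c) hA0 hAA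
  set A := Ac c with hAdef
  set y := ybarA (Ac c) with hydef
  have hΔb : 0 < Δ + b := by linarith
  have hθ0 : 0 < θ := by
    rw [hθ]
    exact div_pos (Real.sqrt_pos.mpr (by linarith)) hσ
  have hα0 : 0 < α := by rw [hα]; positivity
  have hk20 : 0 < k₂ := by rw [hk₂]; positivity
  have hdeq : Δ - xv = Δ ^ 2 / (2 * (Δ + b)) := by
    rw [hxv]; field_simp; ring
  have hd0 : 0 < Δ - xv := by rw [hdeq]; positivity
  have hαd : α * (Δ - xv) ^ 2 = yv := by
    rw [hα, hyv, hdeq]; field_simp; ring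
  set E := Real.exp (θ * y) with hEdef
  set E' := Real.exp (-(θ * y)) with hE'def
  have hty : 0 < θ * y := mul_pos hθ0 hy0
  have hE1 : 1 < E := Real.one_lt_exp_iff.2 hty
  have hE'1 : E' < 1 := Real.exp_lt_one_iff.2 (by linarith)
  have hE'0 : 0 < E' := Real.exp_pos _
  have hS0 : 0 < E - E' := by linarith
  have hA_eq : A * θ * (E - E') = 2 * k₂ * y := by
    have h := hh
    simp only [hFun, ← hEdef, ← hE'def] at h
    linear_combination h
  have key : E - E' ≤ θ * y * (E + E') := by
    have h := aux_sinh_le_mul_cosh hty.le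
    rw [Real.sinh_eq, Real.cosh_eq] at h
    rw [hEdef, hE'def]
    linarith
  have ineq1 : 2 * k₂ / θ ^ 2 ≤ A * (E + E') := by
    have s1 : A * θ * (E - E') ≤ A * θ * (θ * y * (E + E')) :=
      mul_le_mul_of_nonneg_left key (mul_pos hA0 hθ0).le
    rw [hA_eq] at s1
    have s2 : 2 * k₂ * y ≤ (A * θ ^ 2 * (E + E')) * y := by linarith [s1]
    have s3 : 2 * k₂ ≤ A * θ ^ 2 * (E + E') := le_of_mul_le_mul_right s2 hy0
    rw [div_le_iff₀ (by positivity)]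
    linarith [s3]
  have hcξ : c = xiFun θ k₂ y := by
    rw [← hg]
    simp only [gFun, xiFun, ← hydef, ← hEdef, ← hE'def]
    have hSne : E - E' ≠ 0 := ne_of_gt hS0
    have hθne : θ ≠ 0 := ne_of_gt hθ0
    field_simp
    linear_combination (-(E + E' - 2)) * hA_eq
  have hyd : y ≤ Δ - xv := by
    by_contra hcon
    push_neg at hcon
    have h := aux_xi_mono hθ0 hk20 hd0 hcon.le
    rw [← hcξ] at h
    linarith
  have hphi : phiFun θ k₂ k₀ xv A xv = 2 * A + k₀ := by
    simp [phiFun]; ring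
  have hgc' : c = -A * E - A * E' + k₂ * y ^ 2 + 2 * A := by
    rw [← hg]; simp only [gFun, ← hydef, ← hEdef, ← hE'def]; rfl
  have hRHSval : ρ * (phiFun θ k₂ k₀ xv A xv - c)
      = ρ * A * (E + E') - α * y ^ 2 + yv - 2 * α / θ ^ 2 := by
    rw [hphi, hgc', hk₀, hk₂]
    have hθne : θ ≠ 0 := ne_of_gt hθ0
    have hρne : ρ ≠ 0 := ne_of_gt hρ
    field_simp
    ring
  have hlow : -α * y ^ 2 + yv ≤ ρ * (phiFun θ k₂ k₀ xv A xv - c) := by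
    rw [hRHSval]
    have t1 : ρ * (2 * k₂ / θ ^ 2) ≤ ρ * (A * (E + E')) :=
      mul_le_mul_of_nonneg_left ineq1 hρ.le
    have t2 : ρ * (2 * k₂ / θ ^ 2) = 2 * α / θ ^ 2 := by
      rw [hk₂]
      have hθne : θ ≠ 0 := ne_of_gt hθ0
      have hρne : ρ ≠ 0 := ne_of_gt hρ
      field_simp
    linarith [t1, t2]
  have h0le : (0:ℝ) ≤ ρ * (phiFun θ k₂ k₀ xv A xv - c) := by
    have hsq : y ^ 2 ≤ (Δ - xv) ^ 2 := pow_le_pow_left₀ hy0.le hyd 2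
    have : α * y ^ 2 ≤ α * (Δ - xv) ^ 2 := mul_le_mul_of_nonneg_left hsq hα0.le
    linarith [hlow, hαd, this]
  unfold RFun
  split_ifs with h1 h2
  · linarith
  · have hsq : y ^ 2 ≤ (x - xv) ^ 2 := by
      have := pow_le_pow_left₀ hy0.le hx 2
      rwa [sq_abs] at this
    have : α * y ^ 2 ≤ α * (x - xv) ^ 2 := mul_le_mul_of_nonneg_left hsq hα0.le
    linarith [hlow]
  · exact h0le
end
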